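/- Consider n qubits, numbers λ_i ∈ [0,1) with W_i = (1/2)(1 + λ_i Z), reset dissipators D_i(ρ) = Tr_i(ρ) ⊗ W_i, weights q_i > 0 with ∑_i q_i = 1, E_0(ρ) = ∑_i q_i D_i(ρ), ρ_0 = ⊗_i W_i, and the super-operator K(ρ) := ρ − E_0(ρ) + Tr(ρ)·ρ_0. For a string α set q_α := ∑_{i ∈ supp(α)} q_i. Then K(Q_α) = q_α·Q_α for every α ≠ (0,…,0) and K(Q_{(0,…,0)}) = Q_{(0,…,0)}; consequently K is an invertible linear map on the space of n-qubit operators, its Hilbert–Schmidt adjoint K* is invertible, and (K*)⁻¹(Q̃_α) = (1/q_α)·Q̃_α for α ≠ (0,…,0) while (K*)⁻¹(Q̃_{(0,…,0)}) = Q̃_{(0,…,0)}. -/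

import Mathlib

namespace SSP

noncomputable section

open Matrix
open scoped ComplexOrder

/-- Computational basis labels for `n` qubits. -/
abbrev Idx (n : ℕ) := Fin n → Fin 2

/-- Operators (matrices) on the Hilbert space of `n` qubits. -/
abbrev Op (n : ℕ) := Matrix (Idx n) (Idx n) ℂ

/-- Super-operators on `n` qubits. -/
abbrev SOp (n : ℕ) := Op n →ₗ[ℂ] Op n

/-- The operator norm (largest singular value) of a complex matrix. -/
noncomputable def opNorm {m : Type*} [Fintype m] [DecidableEq m]
    (M : Matrix m m ℂ) : ℝ :=
  ‖Matrix.toEuclideanCLM (𝕜 := ℂ) M‖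

/-- A density matrix: positive semidefinite with unit trace. -/
def IsDensity {n : ℕ} (ρ : Op n) : Prop := ρ.PosSemidef ∧ ρ.trace = 1

/-- An operator is supported on the set `S` of qubits if it has the form
`Ô_S ⊗ 1` on the remaining qubits. -/
def SupportedOn {n : ℕ} (S : Set (Fin n)) (M : Op n) : Prop :=
  (∀ x y : Idx n, (∃ i ∉ S, x i ≠ y i) → M x y = 0) ∧
  (∀ x y x' y' : Idx n,
      (∀ i ∈ S, x i = x' i) → (∀ i ∈ S, y i = y' i) →
      (∀ i ∉ S, x i = y i) → (∀ i ∉ S, x' i = y' i) → M x y = M x' y')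

/-- The support of an operator: the smallest set of qubits supporting it
(the intersection of all supporting sets). -/
def suppOp {n : ℕ} (M : Op n) : Set (Fin n) :=
  {i | ∀ S : Set (Fin n), SupportedOn S M → i ∈ S}

/-- `E` is a quantum channel (CPTP map) acting only on the qubits in `S`:
it has a Kraus representation whose Kraus operators are all supported on `S`. -/
def IsChannelOn {n : ℕ} (S : Set (Fin n)) (E : SOp n) : Prop :=
  ∃ (m : ℕ) (F : Fin m → Op n),
    (∀ j, SupportedOn S (F j)) ∧
    (∑ j, (F j)ᴴ * F j = 1) ∧
    (∀ ρ, E ρ = ∑ j, F j * ρ * (F j)ᴴ)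

/-- A quantum channel on the whole system. -/
def IsChannel {n : ℕ} (E : SOp n) : Prop := IsChannelOn Set.univ E

/-- `Estar` is the adjoint of `E` with respect to the Hilbert–Schmidt
inner product `⟨A,B⟩ = Tr(A†B)`. -/
def IsHSAdjoint {n : ℕ} (E Estar : SOp n) : Prop :=
  ∀ A B : Op n, ((Estar A)ᴴ * B).trace = (Aᴴ * (E B)).trace

/-- An ergodic channel: it has a unique fixed point among density matrices,
this fixed point is full rank (positive definite), and there is no other
eigenvalue of modulus one. -/
def IsErgodic {n : ℕ} (E : SOp n) : Prop :=
  (∃ σ : Op n, IsDensity σ ∧ σ.PosDef ∧ E σ = σ ∧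
      ∀ ρ : Op n, IsDensity ρ → E ρ = ρ → ρ = σ) ∧
  (∀ μ : ℂ, Module.End.HasEigenvalue (E : Module.End ℂ (Op n)) μ → μ = 1 ∨ ‖μ‖ < 1)

/-- The set of qubits (endpoints) of an edge. -/
def edgeQubits {n : ℕ} (e : Sym2 (Fin n)) : Set (Fin n) := {i | i ∈ e}

/-- Finset of endpoints of an edge. -/
def edgeFinset' {n : ℕ} (e : Sym2 (Fin n)) : Finset (Fin n) :=
  Finset.univ.filter (· ∈ e)

/-- A Hamiltonian is geometrically `k`-local w.r.t. the graph `G`: it is a sum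
of Hermitian terms, each supported on a connected subset of `G` with at most
`k` vertices. -/
def GeomLocal {n : ℕ} (G : SimpleGraph (Fin n)) (k : ℕ) (H : Op n) : Prop :=
  ∃ (m : ℕ) (h : Fin m → Op n) (S : Fin m → Set (Fin n)),
    H = ∑ j, h j ∧
    ∀ j, (h j).IsHermitian ∧ SupportedOn (S j) (h j) ∧
      (S j).ncard ≤ k ∧ (G.induce (S j)).Preconnected

/-- The ball of radius `k` around a set of vertices, in the graph metric. -/
def Ball {n : ℕ} (G : SimpleGraph (Fin n)) (X : Set (Fin n)) (k : ℕ) :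
    Set (Fin n) :=
  {v | ∃ u ∈ X, ∃ w : G.Walk u v, w.length ≤ k}

/- Pauli matrices and the Wauli bases. -/
def PX : Matrix (Fin 2) (Fin 2) ℂ := !![0, 1; 1, 0]
def PY : Matrix (Fin 2) (Fin 2) ℂ := !![0, -Complex.I; Complex.I, 0]
def PZ : Matrix (Fin 2) (Fin 2) ℂ := !![1, 0; 0, -1]

/-- `W = (1/2)(1 + λ Z)`. -/
noncomputable def Wmat (l : ℝ) : Matrix (Fin 2) (Fin 2) ℂ :=
  (2⁻¹ : ℂ) • (1 + (l : ℂ) • PZ)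

/-- Single-qubit Wauli basis `{W, X/2, Y/2, Z/2}`. -/
noncomputable def wauli (l : ℝ) : Fin 4 → Matrix (Fin 2) (Fin 2) ℂ :=
  ![Wmat l, (2⁻¹ : ℂ) • PX, (2⁻¹ : ℂ) • PY, (2⁻¹ : ℂ) • PZ]

/-- Single-qubit dual Wauli basis `{1, X, Y, Z - λ·1}`. -/
noncomputable def dualWauli (l : ℝ) : Fin 4 → Matrix (Fin 2) (Fin 2) ℂ :=
  ![1, PX, PY, PZ - (l : ℂ) • 1]

/-- The `n`-qubit Wauli basis element `Q_α` (tensor product of the `Q_{α_i}`). -/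
noncomputable def Qmat {n : ℕ} (lam : Fin n → ℝ) (α : Fin n → Fin 4) : Op n :=
  Matrix.of fun x y => ∏ i, wauli (lam i) (α i) (x i) (y i)

/-- The `n`-qubit dual Wauli basis element `Q̃_α`. -/
noncomputable def Qdual {n : ℕ} (lam : Fin n → ℝ) (α : Fin n → Fin 4) : Op n :=
  Matrix.of fun x y => ∏ i, dualWauli (lam i) (α i) (x i) (y i)

/-- The support of a Wauli string. -/
def suppStr {n : ℕ} (α : Fin n → Fin 4) : Finset (Fin n) :=
  Finset.univ.filter (fun i => α i ≠ 0)

/-- The coefficient `c_α = Tr(Q_α O)` of the expansion `O = ∑_α c_α Q̃_α`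
in the dual Wauli basis. -/
noncomputable def QCoeff {n : ℕ} (lam : Fin n → ℝ) (O : Op n)
    (α : Fin n → Fin 4) : ℂ :=
  (Qmat lam α * O).trace

/-- The `Q1` norm: the `ℓ¹` norm of the dual-Wauli coefficient vector. -/
noncomputable def Q1Norm {n : ℕ} (lam : Fin n → ℝ) (O : Op n) : ℝ :=
  ∑ α : Fin n → Fin 4, ‖QCoeff lam O α‖

/-- The subspace `S_k`: the span of the dual Wauli operators `Q̃_α` with
`|α| ≤ k`. -/
def Sk {n : ℕ} (lam : Fin n → ℝ) (k : ℕ) : Submodule ℂ (Op n) :=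
  Submodule.span ℂ {Q | ∃ α : Fin n → Fin 4, (suppStr α).card ≤ k ∧ Q = Qdual lam α}

/-- The trace norm `Tr √(O†O)` of a matrix. -/
noncomputable def traceNorm {m : Type*} [Fintype m] [DecidableEq m]
    (M : Matrix m m ℂ) : ℝ :=
  (((Matrix.isHermitian_conjTranspose_mul_self M).eigenvectorUnitary.1 *
      Matrix.diagonal (((↑) : ℝ → ℂ) ∘ (√·) ∘ (Matrix.isHermitian_conjTranspose_mul_self M).eigenvalues) *
      (star (Matrix.isHermitian_conjTranspose_mul_self M).eigenvectorUnitary : Matrix m m ℂ)).trace).re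


-- ### auxiliary lemmas

lemma wauli_trace (l : ℝ) (a : Fin 4) :
    ∑ b : Fin 2, wauli l a b b = if a = 0 then 1 else 0 := by
  fin_cases a <;>
    simp [wauli, Wmat, PX, PY, PZ, Fin.sum_univ_two, Matrix.one_apply,
      Matrix.smul_apply, Matrix.add_apply] <;> ring

lemma pairing_single (l : ℝ) (a b : Fin 4) :
    ∑ p : Fin 2 × Fin 2, dualWauli l a p.1 p.2 * wauli l b p.2 p.1
      = if a = b then 1 else 0 := by
  fin_cases a <;> fin_cases b <;>
    simp [dualWauli, wauli, Wmat, PX, PY, PZ, Fintype.sum_prod_type,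
      Fin.sum_univ_two, Matrix.one_apply, Matrix.smul_apply, Matrix.add_apply,
      Matrix.sub_apply] <;> ring_nf <;>
    simp [Complex.I_sq] <;> ring

lemma dualWauli_conj (l : ℝ) (a : Fin 4) (c d : Fin 2) :
    (starRingEnd ℂ) (dualWauli l a d c) = dualWauli l a c d := by
  fin_cases a <;> fin_cases c <;> fin_cases d <;>
    simp [dualWauli, PX, PY, PZ, Matrix.one_apply, Matrix.sub_apply,
      Matrix.smul_apply]

lemma Qdual_conjTranspose {n : ℕ} (lam : Fin n → ℝ) (α : Fin n → Fin 4) :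
    (Qdual lam α)ᴴ = Qdual lam α := by
  ext x y
  simp only [conjTranspose_apply, Qdual, of_apply]
  rw [show star (∏ i, dualWauli (lam i) (α i) (y i) (x i))
      = ∏ i, star (dualWauli (lam i) (α i) (y i) (x i)) from star_prod _ _]
  exact Finset.prod_congr rfl fun i _ => dualWauli_conj (lam i) (α i) (x i) (y i)


lemma trace_Qmat {n : ℕ} (lam : Fin n → ℝ) (α : Fin n → Fin 4) :
    (Qmat lam α).trace = if α = 0 then 1 else 0 := by
  have h : (Qmat lam α).trace
      = ∑ x : Idx n, ∏ i, wauli (lam i) (α i) (x i) (x i) := rfl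
  have hps := Finset.prod_univ_sum (fun _ : Fin n => (Finset.univ : Finset (Fin 2)))
    (fun i b => wauli (lam i) (α i) b b)
  rw [Fintype.piFinset_univ] at hps
  rw [h, ← hps]
  by_cases hα : α = 0
  · subst hα
    rw [if_pos rfl]
    exact Finset.prod_eq_one fun i _ => by rw [wauli_trace]; simp
  · obtain ⟨i, hi⟩ : ∃ i, α i ≠ 0 := by
      by_contra hc
      push_neg at hc
      exact hα (funext fun i => hc i)
    rw [if_neg hα]
    exact Finset.prod_eq_zero (Finset.mem_univ i)
      (by rw [wauli_trace, if_neg hi])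

lemma trace_Qdual_mul_Qmat {n : ℕ} (lam : Fin n → ℝ) (β α : Fin n → Fin 4) :
    (Qdual lam β * Qmat lam α).trace = if β = α then 1 else 0 := by
  have h : (Qdual lam β * Qmat lam α).trace
      = ∑ x : Idx n, ∑ y : Idx n,
          ∏ i, (dualWauli (lam i) (β i) (x i) (y i)
            * wauli (lam i) (α i) (y i) (x i)) := by
    simp only [Matrix.trace, Matrix.diag, Matrix.mul_apply, Qdual, Qmat,
      Matrix.of_apply, ← Finset.prod_mul_distrib]
  rw [h]
  have h2 : ∑ z : Fin n → Fin 2 × Fin 2,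
          ∏ i, (dualWauli (lam i) (β i) (z i).1 (z i).2
            * wauli (lam i) (α i) (z i).2 (z i).1)
      = ∑ x : Idx n, ∑ y : Idx n,
        ∏ i, (dualWauli (lam i) (β i) (x i) (y i)
          * wauli (lam i) (α i) (y i) (x i)) := by
    calc ∑ z : Fin n → Fin 2 × Fin 2,
          ∏ i, (dualWauli (lam i) (β i) (z i).1 (z i).2
            * wauli (lam i) (α i) (z i).2 (z i).1)
        = ∑ p : Idx n × Idx n, ∏ i, (dualWauli (lam i) (β i) (p.1 i) (p.2 i)
            * wauli (lam i) (α i) (p.2 i) (p.1 i)) :=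
          Fintype.sum_equiv (Equiv.arrowProdEquivProdArrow (Fin n) (fun _ => Fin 2) (fun _ => Fin 2))
            _ _ (fun z => rfl)
      _ = _ := Fintype.sum_prod_type _
  rw [← h2]
  have hps := Finset.prod_univ_sum (fun _ : Fin n => (Finset.univ : Finset (Fin 2 × Fin 2)))
    (fun i p => dualWauli (lam i) (β i) p.1 p.2 * wauli (lam i) (α i) p.2 p.1)
  rw [Fintype.piFinset_univ] at hps
  rw [← hps]
  by_cases hβ : β = α
  · subst hβ
    rw [if_pos rfl]
    exact Finset.prod_eq_one fun i _ => by rw [pairing_single, if_pos rfl]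
  · obtain ⟨i, hi⟩ : ∃ i, β i ≠ α i := by
      by_contra hc
      push_neg at hc
      exact hβ (funext fun i => hc i)
    rw [if_neg hβ]
    exact Finset.prod_eq_zero (Finset.mem_univ i)
      (by rw [pairing_single, if_neg hi])

lemma qmat_linearIndependent {n : ℕ} (lam : Fin n → ℝ) :
    LinearIndependent ℂ (Qmat lam) := by
  rw [Fintype.linearIndependent_iff]
  intro g hg β
  have h := congrArg (fun M => (Qdual lam β * M).trace) hg
  simpa [Finset.mul_sum, Matrix.mul_smul, Matrix.trace_sum, Matrix.trace_smul,
    trace_Qdual_mul_Qmat] using h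

lemma card_eq_finrank_op (n : ℕ) :
    Fintype.card (Fin n → Fin 4) = Module.finrank ℂ (Op n) := by
  rw [Module.finrank_matrix]
  simp [Fintype.card_fun]
  rw [← mul_pow]
  norm_num

noncomputable def qmatBasis {n : ℕ} (lam : Fin n → ℝ) :
    Module.Basis (Fin n → Fin 4) ℂ (Op n) :=
  basisOfLinearIndependentOfCardEqFinrank (qmat_linearIndependent lam)
    (card_eq_finrank_op n)

lemma qmatBasis_apply {n : ℕ} (lam : Fin n → ℝ) (α : Fin n → Fin 4) :
    qmatBasis lam α = Qmat lam α := by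
  rw [qmatBasis, coe_basisOfLinearIndependentOfCardEqFinrank]

lemma eq_zero_of_trace_self {n : ℕ} (Z : Op n) (h : (Zᴴ * Z).trace = 0) :
    Z = 0 := by
  have h2 : ∑ j : Idx n, ∑ k : Idx n, Complex.normSq (Z k j) = 0 := by
    have := congrArg Complex.re h
    simpa [Matrix.trace, Matrix.diag, Matrix.mul_apply, Matrix.conjTranspose_apply,
      Complex.mul_conj', Complex.normSq_eq_conj_mul_self, Complex.normSq_apply] using this
  ext k j
  have hterm : Complex.normSq (Z k j) = 0 := by
    have hnn : ∀ j ∈ Finset.univ, (0:ℝ) ≤ ∑ k : Idx n, Complex.normSq (Z k j) :=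
      fun j _ => Finset.sum_nonneg fun k _ => Complex.normSq_nonneg _
    have := (Finset.sum_eq_zero_iff_of_nonneg hnn).mp h2 j (Finset.mem_univ j)
    exact (Finset.sum_eq_zero_iff_of_nonneg
      (fun k _ => Complex.normSq_nonneg _)).mp this k (Finset.mem_univ k)
  simpa using Complex.normSq_eq_zero.mp hterm

lemma eq_zero_of_trace_qmat {n : ℕ} (lam : Fin n → ℝ) (Z : Op n)
    (h : ∀ β, (Zᴴ * Qmat lam β).trace = 0) : Z = 0 := by
  apply eq_zero_of_trace_self
  have hZ := (qmatBasis lam).sum_repr Z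
  calc (Zᴴ * Z).trace
      = (Zᴴ * ∑ α, (qmatBasis lam).repr Z α • qmatBasis lam α).trace := by rw [hZ]
    _ = 0 := by
        simp only [Finset.mul_sum, Matrix.mul_smul, Matrix.trace_sum,
          Matrix.trace_smul, qmatBasis_apply]
        simp [h]


/-- the map `K(ρ) = ρ - E₀(ρ) + Tr(ρ)·ρ₀` is diagonal in the
Wauli basis with eigenvalues `q_α` (and `1` on `Q_{(0,…,0)}`); it is
invertible, its Hilbert–Schmidt adjoint is invertible, and the inverse of the
adjoint is diagonal in the dual Wauli basis with eigenvalues `1/q_α`. -/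
theorem K_diagonal_and_invertible {n : ℕ} (lam : Fin n → ℝ)
    (hlam : ∀ i, 0 ≤ lam i ∧ lam i < 1)
    (q : Fin n → ℝ) (hq0 : ∀ i, 0 < q i) (hqsum : ∑ i, q i = 1)
    (D : Fin n → SOp n)
    (hD : ∀ i (ρ : Op n), D i ρ = Matrix.of fun x y =>
      (∑ b : Fin 2, ρ (Function.update x i b) (Function.update y i b)) *
        Wmat (lam i) (x i) (y i))
    (E0 : SOp n) (hE0 : ∀ ρ : Op n, E0 ρ = ∑ i, q i • D i ρ)
    (K : SOp n)
    (hK : ∀ ρ : Op n, K ρ = ρ - E0 ρ + ρ.trace • Qmat lam 0) :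
    (∀ α : Fin n → Fin 4, α ≠ 0 →
        K (Qmat lam α) = (∑ i ∈ suppStr α, q i : ℝ) • Qmat lam α) ∧
    K (Qmat lam 0) = Qmat lam 0 ∧
    Function.Bijective K ∧
    ∀ Kstar : SOp n, IsHSAdjoint K Kstar →
      Function.Bijective Kstar ∧
      ∀ KstarInv : SOp n,
        (∀ O : Op n, Kstar (KstarInv O) = O) →
        (∀ O : Op n, KstarInv (Kstar O) = O) →
        (∀ α : Fin n → Fin 4, α ≠ 0 →
            KstarInv (Qdual lam α) = ((∑ i ∈ suppStr α, q i)⁻¹ : ℝ) • Qdual lam α) ∧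
        KstarInv (Qdual lam 0) = Qdual lam 0 := by
  classical
  have rsmul : ∀ (r : ℝ) (M : Op n), r • M = (r : ℂ) • M := fun r M => by
    rw [← smul_one_smul ℂ r M, Complex.real_smul, mul_one]
  set c : (Fin n → Fin 4) → ℂ :=
    fun α => if α = 0 then 1 else ((∑ i ∈ suppStr α, q i : ℝ) : ℂ) with hc
  have hcne : ∀ α, c α ≠ 0 := by
    intro α
    by_cases hα : α = 0
    · simp [hc, hα]
    · obtain ⟨i, hi⟩ : ∃ i, α i ≠ 0 := by
        by_contra hcon; push_neg at hcon; exact hα (funext fun i => hcon i)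
      have hpos : (0:ℝ) < ∑ i ∈ suppStr α, q i :=
        Finset.sum_pos (fun i _ => hq0 i) ⟨i, by simp [suppStr, hi]⟩
      simp only [hc, if_neg hα]
      exact_mod_cast ne_of_gt hpos
  have hDQ : ∀ (i : Fin n) (α : Fin n → Fin 4),
      D i (Qmat lam α) = if α i = 0 then Qmat lam α else 0 := by
    intro i α
    ext x y
    rw [hD]
    have hsplit : ∀ b : Fin 2,
        (Qmat lam α) (Function.update x i b) (Function.update y i b)
          = wauli (lam i) (α i) b b
            * ∏ j ∈ Finset.univ.erase i, wauli (lam j) (α j) (x j) (y j) := by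
      intro b
      show (∏ j, wauli (lam j) (α j)
          (Function.update x i b j) (Function.update y i b j)) = _
      rw [← Finset.mul_prod_erase Finset.univ _ (Finset.mem_univ i)]
      congr 1
      · rw [Function.update_self, Function.update_self]
      · exact Finset.prod_congr rfl fun j hj => by
          rw [Function.update_of_ne (Finset.ne_of_mem_erase hj),
            Function.update_of_ne (Finset.ne_of_mem_erase hj)]
    simp only [Matrix.of_apply, hsplit, ← Finset.sum_mul, wauli_trace]
    by_cases hαi : α i = 0
    · rw [if_pos hαi, if_pos hαi]
      show _ = (Qmat lam α) x y
      show _ = ∏ j, wauli (lam j) (α j) (x j) (y j)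
      rw [← Finset.mul_prod_erase Finset.univ
        (fun j => wauli (lam j) (α j) (x j) (y j)) (Finset.mem_univ i), hαi]
      show (1 : ℂ) * _ * Wmat (lam i) (x i) (y i)
        = wauli (lam i) 0 (x i) (y i) * _
      have hW : wauli (lam i) 0 = Wmat (lam i) := rfl
      rw [hW]; ring
    · rw [if_neg hαi, if_neg hαi]
      simp
  have hE0Q : ∀ α : Fin n → Fin 4,
      E0 (Qmat lam α)
        = ((∑ i ∈ Finset.univ.filter (fun i => α i = 0), q i : ℝ) : ℂ)
            • Qmat lam α := by
    intro α
    rw [hE0]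
    have hterm : ∀ i : Fin n, q i • D i (Qmat lam α)
        = (if α i = 0 then ((q i : ℝ) : ℂ) • Qmat lam α else 0) := by
      intro i
      rw [hDQ, rsmul]
      split <;> simp
    rw [Finset.sum_congr rfl fun i _ => hterm i, ← Finset.sum_filter,
      ← Finset.sum_smul]
    push_cast
    rfl
  have hKQ : ∀ α, K (Qmat lam α) = c α • Qmat lam α := by
    intro α
    rw [hK, hE0Q, trace_Qmat]
    by_cases hα : α = 0
    · subst hα
      have hfil : (Finset.univ.filter (fun i => (0 : Fin n → Fin 4) i = 0))
          = (Finset.univ : Finset (Fin n)) := by simp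
      rw [if_pos rfl, hfil, hqsum]
      simp [hc]
    · rw [if_neg hα]
      simp only [hc, if_neg hα, zero_smul, add_zero]
      have hsum : (∑ i ∈ Finset.univ.filter (fun i => α i = 0), q i)
          = 1 - (∑ i ∈ suppStr α, q i) := by
        have := Finset.sum_filter_add_sum_filter_not Finset.univ
          (fun i => α i = 0) q
        rw [hqsum] at this
        have hss : Finset.univ.filter (fun i => ¬ α i = 0) = suppStr α := rfl
        rw [hss] at this
        linarith
      rw [hsum]
      push_cast
      rw [sub_smul, one_smul, sub_sub_cancel]
  have hKinj : Function.Injective K := by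
    rw [injective_iff_map_eq_zero]
    intro x hx
    have hXrepr := (qmatBasis lam).sum_repr x
    have h0 : ∑ α, ((qmatBasis lam).repr x α * c α) • Qmat lam α = 0 := by
      calc ∑ α, ((qmatBasis lam).repr x α * c α) • Qmat lam α
          = K x := by
            conv_rhs => rw [← hXrepr]
            rw [map_sum]
            exact Finset.sum_congr rfl fun α _ => by
              rw [qmatBasis_apply, LinearMap.map_smul, hKQ, smul_smul]
        _ = 0 := hx
    have hall := Fintype.linearIndependent_iff.mp (qmat_linearIndependent lam) _ h0
    have hrepr0 : ∀ α, (qmatBasis lam).repr x α = 0 := fun α => by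
      rcases mul_eq_zero.mp (hall α) with h | h
      · exact h
      · exact absurd h (hcne α)
    calc x = ∑ α, (qmatBasis lam).repr x α • qmatBasis lam α := hXrepr.symm
      _ = 0 := by simp [hrepr0]
  have hKsurj : Function.Surjective K := LinearMap.injective_iff_surjective.mp hKinj
  refine ⟨?_, ?_, ⟨hKinj, hKsurj⟩, ?_⟩
  · intro α hα
    rw [hKQ, rsmul]
    simp [hc, hα]
  · have := hKQ 0
    simpa [hc] using this
  · intro Kstar hKs
    have hcstar : ∀ α, (starRingEnd ℂ) (c α) = c α := fun α => by
      by_cases hα : α = 0 <;> simp [hc, hα, Complex.conj_ofReal]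
    have hKsQ : ∀ α, Kstar (Qdual lam α) = c α • Qdual lam α := by
      intro α
      have hZ : Kstar (Qdual lam α) - c α • Qdual lam α = 0 := by
        apply eq_zero_of_trace_qmat lam
        intro β
        rw [conjTranspose_sub, Matrix.sub_mul, trace_sub, hKs,
          conjTranspose_smul, Matrix.smul_mul, trace_smul]
        rw [Qdual_conjTranspose, hKQ, Matrix.mul_smul, trace_smul,
          trace_Qdual_mul_Qmat]
        rw [RCLike.star_def, hcstar]
        by_cases hβ : α = β
        · subst hβ; simp
        · simp [hβ]
      have := sub_eq_zero.mp hZ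
      exact this
    have hKsinj : Function.Injective Kstar := by
      rw [injective_iff_map_eq_zero]
      intro A hA
      apply eq_zero_of_trace_self
      obtain ⟨B, hB⟩ := hKsurj A
      have h := hKs A B
      rw [hA, hB] at h
      simpa using h.symm
    have hKssurj : Function.Surjective Kstar :=
      LinearMap.injective_iff_surjective.mp hKsinj
    refine ⟨⟨hKsinj, hKssurj⟩, ?_⟩
    intro KInv h1 h2
    constructor
    · intro α hα
      have hcongr := congrArg KInv (hKsQ α)
      rw [h2, LinearMap.map_smul] at hcongr
      have h3 : KInv (Qdual lam α) = (c α)⁻¹ • Qdual lam α := by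
        rw [eq_comm, inv_smul_eq_iff₀ (hcne α)]
        exact hcongr
      rw [h3, rsmul]
      simp [hc, hα, Complex.ofReal_inv]
    · have hcongr := congrArg KInv (hKsQ 0)
      rw [h2] at hcongr
      simp only [hc, if_pos rfl, one_smul] at hcongr
      exact hcongr.symm


end

end SSP
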